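/- For all x in (0, π/2), -x²/3 - log(x/tan x) > 0, equivalently log(tan x) - log x > x²/3. -/

import Mathlib

open Real Set

lemma aux_g_pos : ∀ x ∈ Set.Ioo (0:ℝ) (Real.pi/2),
    0 < Real.sin x - x * Real.cos x - x^2/3 * Real.sin x := by
  have hmono : StrictMonoOn (fun x : ℝ => Real.sin x - x * Real.cos x - x^2/3 * Real.sin x)
      (Set.Icc 0 (Real.pi/2)) := by
    apply strictMonoOn_of_deriv_pos (convex_Icc _ _)
    · fun_prop
    · intro x hx
      rw [interior_Icc] at hx
      obtain ⟨hx0, hx2⟩ := hx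
      have hd : deriv (fun x : ℝ => Real.sin x - x * Real.cos x - x^2/3 * Real.sin x) x
          = x/3 * (Real.sin x - x * Real.cos x) := by
        have h := ((Real.hasDerivAt_sin x).sub ((hasDerivAt_id x).mul (Real.hasDerivAt_cos x))).sub
            ((((hasDerivAt_pow 2 x).div_const 3).mul (Real.hasDerivAt_sin x)))
        simp only [id] at h; exact h.deriv.trans (by push_cast; ring)
      rw [hd]
      have hcos : 0 < Real.cos x := Real.cos_pos_of_mem_Ioo ⟨by linarith [Real.pi_pos], hx2⟩
      have htan : x < Real.tan x := Real.lt_tan hx0 hx2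
      rw [Real.tan_eq_sin_div_cos, lt_div_iff₀ hcos] at htan
      have : 0 < Real.sin x - x * Real.cos x := by linarith
      positivity
  intro x hx
  have h0 : (0:ℝ) ∈ Set.Icc 0 (Real.pi/2) := ⟨le_refl _, by positivity⟩
  have hxm : x ∈ Set.Icc 0 (Real.pi/2) := ⟨hx.1.le, hx.2.le⟩
  have := hmono h0 hxm hx.1
  simpa using this

theorem stmt_7 : ∀ x ∈ Set.Ioo (0:ℝ) (Real.pi/2), -x^2/3 - Real.log (x / Real.tan x) > 0 := by
  intro x hx
  obtain ⟨hx0, hx2⟩ := hx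
  have hsin : 0 < Real.sin x := Real.sin_pos_of_pos_of_lt_pi hx0 (by linarith [Real.pi_pos])
  have hcos : 0 < Real.cos x := Real.cos_pos_of_mem_Ioo ⟨by linarith [Real.pi_pos], hx2⟩
  have htan : 0 < Real.tan x := Real.tan_pos_of_pos_of_lt_pi_div_two hx0 hx2
  have hg := aux_g_pos x ⟨hx0, hx2⟩
  -- x / tan x = x * cos x / sin x
  have hquot : x / Real.tan x = x * Real.cos x / Real.sin x := by
    rw [Real.tan_eq_sin_div_cos]; field_simp
  have hlog : Real.log (x / Real.tan x) ≤ x / Real.tan x - 1 :=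
    Real.log_le_sub_one_of_pos (by positivity)
  have hkey : x / Real.tan x - 1 < -x^2/3 := by
    rw [hquot, div_sub' hsin.ne', div_lt_iff₀ hsin]
    nlinarith
  linarith
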